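/- A real n×m matrix A is a Monge matrix if and only if there exist a staircase matrix S (a nonnegative linear combination of the elementary staircase matrices L^{(i,j)} for 2 ≤ i ≤ n, 2 ≤ j ≤ m) and vectors u ∈ ℝⁿ, v ∈ ℝᵐ such that A(i,j) = S(i,j) + u(i) + v(j) for all i, j. -/
import Mathlib


/-- A real n×m matrix is Monge iff it decomposes as a staircase matrix (a nonnegative
combination of elementary staircase matrices L^{(i,j)}, i,j ≥ 1 in 0-indexed terms)
plus a matrix of the form u(i) + v(j). -/
theorem monge_iff_staircase_decomposition (n m : ℕ) (A : Fin n → Fin m → ℝ) :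
    (∀ (i i' : Fin n) (j j' : Fin m), i < i' → j < j' →
        A i j' + A i' j ≤ A i j + A i' j') ↔
      ∃ (c : Fin n → Fin m → ℝ) (u : Fin n → ℝ) (v : Fin m → ℝ),
        (∀ i j, 0 ≤ c i j) ∧
        ∀ t s, A t s =
          (∑ i : Fin n, ∑ j : Fin m,
            if 1 ≤ (i : ℕ) ∧ 1 ≤ (j : ℕ) ∧ i ≤ t ∧ j ≤ s then c i j else 0)
          + u t + v s := by
  constructor
  · intro hA
    rcases Nat.eq_zero_or_pos n with hn | hn
    · subst hn; exact ⟨0, 0, 0, fun i j => le_refl 0, fun t => t.elim0⟩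
    rcases Nat.eq_zero_or_pos m with hm | hm
    · subst hm; exact ⟨0, 0, 0, fun i j => le_refl 0, fun t s => s.elim0⟩
    -- extend A to ℕ × ℕ
    set g : ℕ → ℕ → ℝ := fun i j =>
      if h : i < n ∧ j < m then A ⟨i, h.1⟩ ⟨j, h.2⟩ else 0 with hg
    set C : ℕ → ℕ → ℝ := fun i j =>
      g (i-1) (j-1) + g i j - g (i-1) j - g i (j-1) with hC
    have hCnn : ∀ i j, i < n → j < m → 0 ≤ C i j := by
      intro i j hin hjm
      rcases Nat.eq_zero_or_pos i with hi | hi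
      · simp [hC, hi]
      rcases Nat.eq_zero_or_pos j with hj | hj
      · simp [hC, hj]
      have h1 : i - 1 < n := by omega
      have h2 : j - 1 < m := by omega
      have key := hA ⟨i-1, h1⟩ ⟨i, hin⟩ ⟨j-1, h2⟩ ⟨j, hjm⟩
        (by simp [Fin.lt_def]; omega) (by simp [Fin.lt_def]; omega)
      simp only [hC, hg]
      rw [dif_pos ⟨h1, h2⟩, dif_pos ⟨hin, hjm⟩, dif_pos ⟨h1, hjm⟩, dif_pos ⟨hin, h2⟩]
      linarith
    refine ⟨fun i j => C i.val j.val,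
      fun t => g t.val 0,
      fun s => g 0 s.val - g 0 0,
      fun i j => hCnn i.val j.val i.isLt j.isLt, ?_⟩
    intro t s
    have hsum : (∑ i : Fin n, ∑ j : Fin m,
        if 1 ≤ (i : ℕ) ∧ 1 ≤ (j : ℕ) ∧ i ≤ t ∧ j ≤ s then C i.val j.val else 0)
        = g t.val s.val - g t.val 0 - g 0 s.val + g 0 0 := by
      have step1 : (∑ i : Fin n, ∑ j : Fin m,
          if 1 ≤ (i : ℕ) ∧ 1 ≤ (j : ℕ) ∧ i ≤ t ∧ j ≤ s then C i.val j.val else 0)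
          = ∑ i ∈ Finset.range n, ∑ j ∈ Finset.range m,
            if 1 ≤ i ∧ 1 ≤ j ∧ i ≤ t.val ∧ j ≤ s.val then C i j else 0 := by
        simp only [Fin.le_def]
        rw [Fin.sum_univ_eq_sum_range (fun i => ∑ j : Fin m,
          if 1 ≤ i ∧ 1 ≤ (j : ℕ) ∧ i ≤ t.val ∧ (j : ℕ) ≤ s.val then C i j.val else 0)]
        refine Finset.sum_congr rfl fun i _ => ?_
        rw [Fin.sum_univ_eq_sum_range (fun j =>
          if 1 ≤ i ∧ 1 ≤ j ∧ i ≤ t.val ∧ j ≤ s.val then C i j else 0)]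
      rw [step1]
      have inner : ∀ i, 1 ≤ i → (∑ j ∈ Finset.range m,
          if 1 ≤ i ∧ 1 ≤ j ∧ i ≤ t.val ∧ j ≤ s.val then C i j else 0)
          = if i ≤ t.val then
              ((g i s.val - g (i-1) s.val) - (g i 0 - g (i-1) 0)) else 0 := by
        intro i hi1
        by_cases hit : i ≤ t.val
        · rw [if_pos hit]
          have : ∀ j ∈ Finset.range m,
              (if 1 ≤ i ∧ 1 ≤ j ∧ i ≤ t.val ∧ j ≤ s.val then C i j else 0)
              = (if 1 ≤ j ∧ j ≤ s.val then C i j else 0) := by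
            intro j _; by_cases h : 1 ≤ j ∧ j ≤ s.val
            · rw [if_pos ⟨hi1, h.1, hit, h.2⟩, if_pos h]
            · rw [if_neg (by tauto), if_neg h]
          rw [Finset.sum_congr rfl this, ← Finset.sum_filter]
          have hf : Finset.filter (fun j => 1 ≤ j ∧ j ≤ s.val) (Finset.range m)
              = Finset.Ico 1 (s.val + 1) := by
            ext j; simp; have := s.isLt; omega
          rw [hf, Finset.sum_Ico_eq_sum_range]
          simp only [Nat.add_sub_cancel]
          have : ∀ j ∈ Finset.range s.val, C i (1 + j)
              = (fun j => g i j - g (i-1) j) (j+1) - (fun j => g i j - g (i-1) j) j := by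
            intro j _
            simp only [hC]
            rw [show (1 + j) = j + 1 by omega]
            simp only [Nat.add_sub_cancel]
            ring
          rw [Finset.sum_congr rfl this, Finset.sum_range_sub (fun j => g i j - g (i-1) j)]
        · rw [if_neg hit]
          refine Finset.sum_eq_zero fun j _ => if_neg (by tauto)
      have step2 : (∑ i ∈ Finset.range n, ∑ j ∈ Finset.range m,
          if 1 ≤ i ∧ 1 ≤ j ∧ i ≤ t.val ∧ j ≤ s.val then C i j else 0)
          = ∑ i ∈ Finset.range n, (if 1 ≤ i ∧ i ≤ t.val then
              ((g i s.val - g (i-1) s.val) - (g i 0 - g (i-1) 0)) else 0) := by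
        refine Finset.sum_congr rfl fun i _ => ?_
        by_cases hi1 : 1 ≤ i
        · rw [inner i hi1]
          by_cases hit : i ≤ t.val
          · rw [if_pos hit, if_pos ⟨hi1, hit⟩]
          · rw [if_neg hit, if_neg (by tauto)]
        · rw [if_neg (by tauto)]
          refine Finset.sum_eq_zero fun j _ => if_neg (by tauto)
      rw [step2, ← Finset.sum_filter]
      have hf : Finset.filter (fun i => 1 ≤ i ∧ i ≤ t.val) (Finset.range n)
          = Finset.Ico 1 (t.val + 1) := by
        ext i; simp; have := t.isLt; omega
      rw [hf, Finset.sum_Ico_eq_sum_range]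
      simp only [Nat.add_sub_cancel]
      have : ∀ i ∈ Finset.range t.val,
          ((g (1+i) s.val - g (1+i-1) s.val) - (g (1+i) 0 - g (1+i-1) 0))
          = (fun i => g i s.val - g i 0) (i+1) - (fun i => g i s.val - g i 0) i := by
        intro i _
        rw [show (1 + i) = i + 1 by omega]
        simp only [Nat.add_sub_cancel]
        ring
      rw [Finset.sum_congr rfl this, Finset.sum_range_sub (fun i => g i s.val - g i 0)]
      ring
    rw [hsum]
    have hA' : g t.val s.val = A t s := by
      simp only [hg]
      rw [dif_pos ⟨t.isLt, s.isLt⟩]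
    rw [hA']
    ring
  · rintro ⟨c, u, v, hc, hdec⟩
    intro i i' j j' hii hjj
    rw [hdec i j', hdec i' j, hdec i j, hdec i' j']
    have key : (∑ i0 : Fin n, ∑ j0 : Fin m,
          if 1 ≤ (i0 : ℕ) ∧ 1 ≤ (j0 : ℕ) ∧ i0 ≤ i ∧ j0 ≤ j' then c i0 j0 else 0)
        + (∑ i0 : Fin n, ∑ j0 : Fin m,
          if 1 ≤ (i0 : ℕ) ∧ 1 ≤ (j0 : ℕ) ∧ i0 ≤ i' ∧ j0 ≤ j then c i0 j0 else 0)
        ≤ (∑ i0 : Fin n, ∑ j0 : Fin m,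
          if 1 ≤ (i0 : ℕ) ∧ 1 ≤ (j0 : ℕ) ∧ i0 ≤ i ∧ j0 ≤ j then c i0 j0 else 0)
        + (∑ i0 : Fin n, ∑ j0 : Fin m,
          if 1 ≤ (i0 : ℕ) ∧ 1 ≤ (j0 : ℕ) ∧ i0 ≤ i' ∧ j0 ≤ j' then c i0 j0 else 0) := by
      rw [← Finset.sum_add_distrib, ← Finset.sum_add_distrib]
      refine Finset.sum_le_sum fun i0 _ => ?_
      rw [← Finset.sum_add_distrib, ← Finset.sum_add_distrib]
      refine Finset.sum_le_sum fun j0 _ => ?_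
      have hcn := hc i0 j0
      simp only [Fin.le_def]
      rw [Fin.lt_def] at hii hjj
      split_ifs <;> first | linarith | (exfalso; omega)
    linarith
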